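/- Let A be a ring, N an A-module, and n a nonnegative integer. Suppose 0 → N → E_0 → ⋯ → E_{n-1} → D → 0 is exact with each E_i injective. If every A-module of finite flat dimension has projective dimension at most n, then D is strongly cotorsion. -/

import Mathlib

open CategoryTheory

universe u

noncomputable section

variable (A : Type u) [Ring A]

/-- `Ext^n_A(M,N)`, as a `ℤ`-module, for left modules over an arbitrary ring `A`. -/
abbrev extAb (n : ℕ) (M N : ModuleCat.{u} A) : ModuleCat.{u} ℤ :=
  ((Ext ℤ (ModuleCat.{u} A) n).obj (Opposite.op M)).obj N

/-- Vanishing of `Ext^n_A(M,N)`. -/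
def ExtVanish (n : ℕ) (M N : ModuleCat.{u} A) : Prop :=
  Subsingleton (extAb A n M N)

/-- The subgroup of `E ⊗_ℤ M` by which one divides to obtain `E ⊗_A M`,
for a right `A`-module `E` and a left `A`-module `M`. -/
def tensorRel (E : Type u) [AddCommGroup E] [Module Aᵐᵒᵖ E]
    (M : Type u) [AddCommGroup M] [Module A M] :
    Submodule ℤ (TensorProduct ℤ E M) :=
  Submodule.span ℤ {x | ∃ (e : E) (a : A) (m : M),
    x = (MulOpposite.op a • e) ⊗ₜ[ℤ] m - e ⊗ₜ[ℤ] (a • m)}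

/-- The tensor product `E ⊗_A M` of a right `A`-module `E` and a left `A`-module `M`. -/
abbrev RTensor (E : Type u) [AddCommGroup E] [Module Aᵐᵒᵖ E]
    (M : Type u) [AddCommGroup M] [Module A M] : Type u :=
  TensorProduct ℤ E M ⧸ tensorRel A E M

/-- Functoriality of `E ⊗_A -` in the left-module variable. -/
def RTensor.map (E : Type u) [AddCommGroup E] [Module Aᵐᵒᵖ E]
    {M N : Type u} [AddCommGroup M] [Module A M] [AddCommGroup N] [Module A N]
    (f : M →ₗ[A] N) : RTensor A E M →ₗ[ℤ] RTensor A E N :=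
  Submodule.mapQ _ _ (LinearMap.lTensor E f.toAddMonoidHom.toIntLinearMap) (by
    simp only [tensorRel]
    rw [Submodule.span_le]
    rintro x ⟨e, a, m, rfl⟩
    refine Submodule.mem_comap.mpr (Submodule.subset_span ⟨e, a, f m, ?_⟩)
    refine (map_sub _ _ _).trans ?_
    erw [LinearMap.lTensor_tmul, LinearMap.lTensor_tmul]
    simp [LinearMap.map_smul])

/-- Functoriality of `- ⊗_A M` in the right-module variable. -/
def RTensor.mapRight {E E' : Type u} [AddCommGroup E] [Module Aᵐᵒᵖ E]
    [AddCommGroup E'] [Module Aᵐᵒᵖ E']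
    (M : Type u) [AddCommGroup M] [Module A M]
    (g : E →ₗ[Aᵐᵒᵖ] E') : RTensor A E M →ₗ[ℤ] RTensor A E' M :=
  Submodule.mapQ _ _ (LinearMap.rTensor M g.toAddMonoidHom.toIntLinearMap) (by
    simp only [tensorRel]
    rw [Submodule.span_le]
    rintro x ⟨e, a, m, rfl⟩
    refine Submodule.mem_comap.mpr (Submodule.subset_span ⟨g e, a, m, ?_⟩)
    refine (map_sub _ _ _).trans ?_
    erw [LinearMap.rTensor_tmul, LinearMap.rTensor_tmul]
    simp [LinearMap.map_smul])

/-- A left `A`-module `M` is flat if `- ⊗_A M` preserves injectivity of maps of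
right `A`-modules. -/
def IsFlat (M : Type u) [AddCommGroup M] [Module A M] : Prop :=
  ∀ (E E' : Type u) [AddCommGroup E] [Module Aᵐᵒᵖ E] [AddCommGroup E'] [Module Aᵐᵒᵖ E']
    (g : E →ₗ[Aᵐᵒᵖ] E'), Function.Injective g →
      Function.Injective (RTensor.mapRight A M g)

/-- A right `A`-module `E` is flat if `E ⊗_A -` preserves injectivity of maps of
left `A`-modules. -/
def IsFlatRight (E : Type u) [AddCommGroup E] [Module Aᵐᵒᵖ E] : Prop :=
  ∀ (M N : Type u) [AddCommGroup M] [Module A M] [AddCommGroup N] [Module A N]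
    (f : M →ₗ[A] N), Function.Injective f →
      Function.Injective (RTensor.map A E f)

/-- An `A`-module `C` is cotorsion if `Ext^1_A(F,C) = 0` for every flat `F`. -/
def Cotorsion (M : ModuleCat.{u} A) : Prop :=
  ∀ F : ModuleCat.{u} A, IsFlat A F → ExtVanish A 1 F M

/-- Flat dimension at most `n`. -/
def FlatDimLE : ℕ → ModuleCat.{u} A → Prop
  | 0, M => IsFlat A M
  | n + 1, M => ∃ (F : ModuleCat.{u} A) (π : F ⟶ M), IsFlat A F ∧
      Function.Surjective π ∧
      FlatDimLE n (ModuleCat.of A (LinearMap.ker (π.hom : F →ₗ[A] M)))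

/-- Finite flat dimension. -/
def FiniteFlatDim (M : ModuleCat.{u} A) : Prop := ∃ n, FlatDimLE A n M

/-- An `A`-module `M` is strongly cotorsion if `Ext^1_A(L,M) = 0` for every `L` of
finite flat dimension. -/
def StronglyCotorsion (M : ModuleCat.{u} A) : Prop :=
  ∀ L : ModuleCat.{u} A, FiniteFlatDim A L → ExtVanish A 1 L M

/-- Projective dimension at most `n`. -/
def ProjDimLE : ℕ → ModuleCat.{u} A → Prop
  | 0, M => Module.Projective A M
  | n + 1, M => ∃ (F : ModuleCat.{u} A) (π : F ⟶ M), Module.Projective A F ∧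
      Function.Surjective π ∧
      ProjDimLE n (ModuleCat.of A (LinearMap.ker (π.hom : F →ₗ[A] M)))

/-- A `ℤ`-indexed complex of `A`-modules (differential of degree `-1`). -/
structure ModComplex where
  X : ℤ → ModuleCat.{u} A
  d : ∀ i : ℤ, X (i + 1) ⟶ X i
  dd : ∀ i : ℤ, d (i + 1) ≫ d i = 0

/-- Acyclicity (exactness at every degree) of a complex. -/
def ModComplex.Acyclic (C : ModComplex A) : Prop :=
  ∀ i : ℤ, LinearMap.range ((C.d (i + 1)).hom : C.X (i + 1 + 1) →ₗ[A] C.X (i + 1)) =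
    LinearMap.ker ((C.d i).hom : C.X (i + 1) →ₗ[A] C.X i)

/-- `G` is Gorenstein injective: a cycle of a totally acyclic complex of injectives. -/
def GorensteinInjective (G : ModuleCat.{u} A) : Prop :=
  ∃ C : ModComplex A,
    (∀ i, Module.Injective A (C.X i)) ∧ C.Acyclic ∧
    (∀ E : ModuleCat.{u} A, Module.Injective A E →
      ∀ (i : ℤ) (f : E ⟶ C.X (i + 1)), f ≫ C.d i = 0 →
        ∃ g : E ⟶ C.X (i + 1 + 1), g ≫ C.d (i + 1) = f) ∧
    Nonempty (G ≃ₗ[A] LinearMap.ker ((C.d (-1)).hom : C.X (-1 + 1) →ₗ[A] C.X (-1)))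

/-- `G` is Gorenstein projective: a cycle of a totally acyclic complex of projectives. -/
def GorensteinProjective (G : ModuleCat.{u} A) : Prop :=
  ∃ C : ModComplex A,
    (∀ i, Module.Projective A (C.X i)) ∧ C.Acyclic ∧
    (∀ Q : ModuleCat.{u} A, Module.Projective A Q →
      ∀ (i : ℤ) (f : C.X (i + 1) ⟶ Q), C.d (i + 1) ≫ f = 0 →
        ∃ g : C.X i ⟶ Q, C.d i ≫ g = f) ∧
    Nonempty (G ≃ₗ[A] LinearMap.ker ((C.d (-1)).hom : C.X (-1 + 1) →ₗ[A] C.X (-1)))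

/-- `G` is Gorenstein flat: a cycle of an acyclic complex of flats which stays acyclic
after applying `E ⊗_A -` for every injective right `A`-module `E`. -/
def GorensteinFlat (G : ModuleCat.{u} A) : Prop :=
  ∃ C : ModComplex A,
    (∀ i, IsFlat A (C.X i)) ∧ C.Acyclic ∧
    (∀ (E : Type u) [AddCommGroup E] [Module Aᵐᵒᵖ E], Module.Injective Aᵐᵒᵖ E →
      ∀ i : ℤ,
        LinearMap.range (RTensor.map A E ((C.d (i + 1)).hom : C.X (i + 1 + 1) →ₗ[A] C.X (i + 1))) =
        LinearMap.ker (RTensor.map A E ((C.d i).hom : C.X (i + 1) →ₗ[A] C.X i))) ∧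
    Nonempty (G ≃ₗ[A] LinearMap.ker ((C.d (-1)).hom : C.X (-1 + 1) →ₗ[A] C.X (-1)))

/-- Flat-cotorsion module. -/
def FlatCotorsion (M : ModuleCat.{u} A) : Prop := IsFlat A M ∧ Cotorsion A M

/-- `G` is Gorenstein flat-cotorsion: a cokernel of a totally acyclic complex of
flat-cotorsion modules. -/
def GorensteinFlatCotorsion (G : ModuleCat.{u} A) : Prop :=
  ∃ C : ModComplex A,
    (∀ i, FlatCotorsion A (C.X i)) ∧ C.Acyclic ∧
    (∀ W : ModuleCat.{u} A, FlatCotorsion A W →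
      ∀ (i : ℤ) (f : C.X (i + 1) ⟶ W), C.d (i + 1) ≫ f = 0 →
        ∃ g : C.X i ⟶ W, C.d i ≫ g = f) ∧
    Nonempty (G ≃ₗ[A]
      (C.X 0 ⧸ LinearMap.range ((C.d 0).hom : C.X (0 + 1) →ₗ[A] C.X 0)))

/-- Gorenstein injective dimension at most `n`: `M` has an injective coresolution whose
`n`-th cosyzygy is Gorenstein injective. -/
def GidLE : ℕ → ModuleCat.{u} A → Prop
  | 0, M => GorensteinInjective A M
  | n + 1, M => ∃ (I : ModuleCat.{u} A) (ι : M ⟶ I), Module.Injective A I ∧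
      Function.Injective ι ∧
      GidLE n (ModuleCat.of A (I ⧸ LinearMap.range (ι.hom : M →ₗ[A] I)))

/-- Injective dimension at most `n`. -/
def InjDimLE : ℕ → ModuleCat.{u} A → Prop
  | 0, M => Module.Injective A M
  | n + 1, M => ∃ (I : ModuleCat.{u} A) (ι : M ⟶ I), Module.Injective A I ∧
      Function.Injective ι ∧
      InjDimLE n (ModuleCat.of A (I ⧸ LinearMap.range (ι.hom : M →ₗ[A] I)))

/-- Gorenstein flat dimension at most `n`. -/
def GfdLE : ℕ → ModuleCat.{u} A → Prop
  | 0, M => GorensteinFlat A M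
  | n + 1, M => ∃ (F : ModuleCat.{u} A) (π : F ⟶ M), IsFlat A F ∧
      Function.Surjective π ∧
      GfdLE n (ModuleCat.of A (LinearMap.ker (π.hom : F →ₗ[A] M)))

/-- The Gorenstein injective dimension, as an extended natural number. -/
def gid (M : ModuleCat.{u} A) : ℕ∞ := sInf {n : ℕ∞ | ∃ k : ℕ, n = k ∧ GidLE A k M}

/-- The injective dimension, as an extended natural number. -/
def injDim (M : ModuleCat.{u} A) : ℕ∞ := sInf {n : ℕ∞ | ∃ k : ℕ, n = k ∧ InjDimLE A k M}

/-- The projective dimension, as an extended natural number. -/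
def projDim (M : ModuleCat.{u} A) : ℕ∞ := sInf {n : ℕ∞ | ∃ k : ℕ, n = k ∧ ProjDimLE A k M}

/-- The finitistic projective dimension of `A`. -/
def FPD : ℕ∞ := sSup {d : ℕ∞ | ∃ M : ModuleCat.{u} A, d = projDim A M ∧ d ≠ ⊤}

/-- `D` is an `n`-th cosyzygy of `N` with respect to an injective coresolution:
there is an exact sequence `0 → N → E_0 → ⋯ → E_{n-1} → D → 0` with the `E_i` injective. -/
def CosyzygyOf : ℕ → ModuleCat.{u} A → ModuleCat.{u} A → Prop
  | 0, N, D => Nonempty (N ≃ₗ[A] D)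
  | n + 1, N, D => ∃ (E : ModuleCat.{u} A) (ι : N ⟶ E), Module.Injective A E ∧
      Function.Injective ι ∧
      CosyzygyOf n (ModuleCat.of A (E ⧸ LinearMap.range (ι.hom : N →ₗ[A] E))) D

/-- `M` is an `n`-th syzygy of `N` with respect to a resolution by flat modules:
there is an exact sequence `0 → M → F_{n-1} → ⋯ → F_0 → N → 0` with the `F_i` flat. -/
def SyzygyOf : ℕ → ModuleCat.{u} A → ModuleCat.{u} A → Prop
  | 0, M, N => Nonempty (M ≃ₗ[A] N)
  | n + 1, M, N => ∃ (F : ModuleCat.{u} A) (ι : M ⟶ F), IsFlat A F ∧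
      Function.Injective ι ∧
      SyzygyOf n (ModuleCat.of A (F ⧸ LinearMap.range (ι.hom : M →ₗ[A] F))) N

end

namespace Stmt15Aux

noncomputable section

open CategoryTheory Limits

universe v

variable {A : Type u} [Ring A]

lemma subsingleton_of_isZero {X : ModuleCat.{u} ℤ} (h : IsZero X) : Subsingleton X := by
  refine ⟨fun a b => ?_⟩
  have h1 : (𝟙 X : X ⟶ X) = 0 := h.eq_of_src _ _
  have key : ∀ x : X, x = 0 := fun x => by
    have : (𝟙 X : X ⟶ X) x = (0 : X ⟶ X) x := by rw [h1]
    simpa using this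
  rw [key a, key b]

lemma subsingleton_iso {X Y : ModuleCat.{u} ℤ} (e : X ≅ Y) (h : Subsingleton X) :
    Subsingleton Y := by
  haveI := h
  exact Equiv.subsingleton ((forget (ModuleCat.{u} ℤ)).mapIso e).symm.toEquiv

lemma subsingleton_ext_iff (L M : ModuleCat.{u} A) (P : ProjectiveResolution L) (j : ℕ) :
    Subsingleton (extAb A j L M) ↔ (P.complex.linearYonedaObj ℤ M).ExactAt j := by
  rw [HomologicalComplex.exactAt_iff_isZero_homology]
  constructor
  · intro h
    haveI := h
    exact IsZero.of_iso (ModuleCat.isZero_of_subsingleton _) (P.isoExt (R := ℤ) j M).symm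
  · intro h
    exact subsingleton_iso (P.isoExt (R := ℤ) j M).symm (subsingleton_of_isZero h)

lemma exactAt_iff_concrete (L M : ModuleCat.{u} A) (P : ProjectiveResolution L) (j : ℕ) :
    (P.complex.linearYonedaObj ℤ M).ExactAt (j + 1) ↔
      ∀ f : P.complex.X (j + 1) ⟶ M, P.complex.d (j + 2) (j + 1) ≫ f = 0 →
        ∃ g : P.complex.X j ⟶ M, P.complex.d (j + 1) j ≫ g = f := by
  rw [HomologicalComplex.exactAt_iff' _ j (j + 1) (j + 2) (by simp) (by simp),
    ShortComplex.moduleCat_exact_iff]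
  constructor
  · intro H f hf
    exact H f hf
  · intro H f hf
    exact H f hf

lemma exists_lift_of_injective (L : ModuleCat.{u} A) (P : ProjectiveResolution L)
    (E : ModuleCat.{u} A) (hE : Module.Injective A E) (j : ℕ)
    (f : P.complex.X (j + 1) ⟶ E) (hf : P.complex.d (j + 2) (j + 1) ≫ f = 0) :
    ∃ g : P.complex.X j ⟶ E, P.complex.d (j + 1) j ≫ g = f := by
  haveI : Injective E := Module.injective_object_of_injective_module A E (inj := hE)
  exact ⟨(P.exact_succ j).descToInjective f hf, (P.exact_succ j).comp_descToInjective f hf⟩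

lemma shift_step (L : ModuleCat.{u} A) (P : ProjectiveResolution L)
    (N E : ModuleCat.{u} A) (hE : Module.Injective A E) (ι : N ⟶ E)
    (hι : Function.Injective ι) (j : ℕ)
    (hN : (P.complex.linearYonedaObj ℤ N).ExactAt (j + 1 + 1)) :
    (P.complex.linearYonedaObj ℤ
      (ModuleCat.of A (E ⧸ LinearMap.range ι.hom))).ExactAt (j + 1) := by
  rw [exactAt_iff_concrete] at hN ⊢
  intro f hf
  let Rg := LinearMap.range ι.hom
  let π : E ⟶ ModuleCat.of A (E ⧸ Rg) := ModuleCat.ofHom Rg.mkQ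
  haveI : Projective (P.complex.X (j + 1)) := P.projective _
  haveI : Epi π := (ModuleCat.epi_iff_surjective _).2 (Submodule.mkQ_surjective Rg)
  let f' : P.complex.X (j + 1) ⟶ E := Projective.factorThru f π
  have hf' : f' ≫ π = f := Projective.factorThru_comp f π
  let φ : P.complex.X (j + 1 + 1) ⟶ E := P.complex.d (j + 1 + 1) (j + 1) ≫ f'
  have hφcomp : φ ≫ π = 0 := by
    show (P.complex.d (j + 1 + 1) (j + 1) ≫ f') ≫ π = 0
    rw [Category.assoc, hf']
    exact hf
  have hφR : ∀ x, φ x ∈ Rg := by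
    intro x
    have h0 : (φ ≫ π) x = 0 := by rw [hφcomp]; rfl
    exact (Submodule.Quotient.mk_eq_zero Rg).1 h0
  let ψ : P.complex.X (j + 1 + 1) ⟶ N :=
    ModuleCat.ofHom (((LinearEquiv.ofInjective ι.hom hι).symm.toLinearMap).comp
      (LinearMap.codRestrict Rg φ.hom hφR))
  have hψι : ψ ≫ ι = φ := by
    ext x
    show ι ((LinearEquiv.ofInjective ι.hom hι).symm ⟨φ x, hφR x⟩) = φ x
    have h2 := (LinearEquiv.ofInjective ι.hom hι).apply_symm_apply ⟨φ x, hφR x⟩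
    have h3 := congrArg Subtype.val h2
    rwa [LinearEquiv.ofInjective_apply] at h3
  haveI : Mono ι := (ModuleCat.mono_iff_injective ι).2 hι
  have hψcyc : P.complex.d (j + 1 + 2) (j + 1 + 1) ≫ ψ = 0 := by
    rw [← cancel_mono ι, Category.assoc, hψι, zero_comp]
    show P.complex.d (j + 1 + 2) (j + 1 + 1) ≫ P.complex.d (j + 1 + 1) (j + 1) ≫ f' = 0
    rw [← Category.assoc, P.complex.d_comp_d, zero_comp]
  obtain ⟨u, hu⟩ := hN ψ hψcyc
  have hf''cyc : P.complex.d (j + 2) (j + 1) ≫ (f' - u ≫ ι) = 0 := by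
    rw [Preadditive.comp_sub, ← Category.assoc, hu, hψι]
    exact sub_self φ
  obtain ⟨g, hg⟩ := exists_lift_of_injective L P E hE j (f' - u ≫ ι) hf''cyc
  refine ⟨g ≫ π, ?_⟩
  have hιπ : ι ≫ π = 0 := by
    ext x
    show π (ι x) = 0
    exact (Submodule.Quotient.mk_eq_zero Rg).2 ⟨x, rfl⟩
  rw [← Category.assoc, hg, Preadditive.sub_comp, hf', Category.assoc, hιπ, comp_zero, sub_zero]

lemma ext_shift : ∀ (n : ℕ) (N D : ModuleCat.{u} A), CosyzygyOf A n N D →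
    ∀ (L : ModuleCat.{u} A) (j : ℕ),
      Subsingleton (extAb A (j + 1 + n) L N) → Subsingleton (extAb A (j + 1) L D) := by
  intro n
  induction n with
  | zero =>
    rintro N D ⟨e⟩ L j hs
    exact subsingleton_iso
      (((Ext ℤ (ModuleCat.{u} A) (j + 1)).obj (Opposite.op L)).mapIso e.toModuleIso) hs
  | succ n ih =>
    rintro N D ⟨E, ι, hE, hι, hc⟩ L j hs
    obtain ⟨P⟩ := (HasProjectiveResolution.out (Z := L))
    refine ih _ D hc L j ?_
    have h1 : j + 1 + (n + 1) = (j + n) + 1 + 1 := by omega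
    rw [h1] at hs
    have h2 : j + 1 + n = (j + n) + 1 := by omega
    rw [h2]
    rw [subsingleton_ext_iff _ _ P] at hs ⊢
    exact shift_step L P N E hE ι hι (j + n) hs

def extendX (F : ModuleCat.{u} A) (Q : ChainComplex (ModuleCat.{u} A) ℕ) :
    ℕ → ModuleCat.{u} A
  | 0 => F
  | (k + 1) => Q.X k

def extendD (F : ModuleCat.{u} A) (Q : ChainComplex (ModuleCat.{u} A) ℕ)
    (d0 : Q.X 0 ⟶ F) : ∀ k : ℕ, extendX F Q (k + 1) ⟶ extendX F Q k
  | 0 => d0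
  | (k + 1) => Q.d (k + 1) k

lemma projDimLE_resolution : ∀ (n : ℕ) (L : ModuleCat.{u} A), ProjDimLE A n L →
    ∃ P : ProjectiveResolution L, ∀ k, n < k → IsZero (P.complex.X k) := by
  intro n
  induction n with
  | zero =>
    intro L hL
    haveI : Projective L := (IsProjective.iff_projective (R := A) L).mp hL
    refine ⟨ProjectiveResolution.self L, fun k hk => ?_⟩
    exact HomologicalComplex.isZero_single_obj_X _ 0 L k (by omega)
  | succ n ih =>
    rintro L ⟨F, π, hF, hπ, hker⟩
    obtain ⟨Q, hQ⟩ := ih _ hker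
    haveI : Projective F := (IsProjective.iff_projective (R := A) F).mp hF
    let ι : ModuleCat.of A (LinearMap.ker π.hom) ⟶ F :=
      ModuleCat.ofHom (LinearMap.ker π.hom).subtype
    have hι : Function.Injective ι := Subtype.val_injective
    let e₀ : Q.complex.X 0 ⟶ ModuleCat.of A (LinearMap.ker π.hom) := Q.π.f 0
    have he₀d : Q.complex.d 1 0 ≫ e₀ = 0 := Q.complex_d_comp_π_f_zero
    have he₀s : Function.Surjective e₀ := (ModuleCat.epi_iff_surjective (Q.π.f 0)).1 inferInstance
    have hex : ∀ x : Q.complex.X 0, e₀ x = 0 → ∃ y, Q.complex.d 1 0 y = x := by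
      intro x hx
      exact (ShortComplex.moduleCat_exact_iff _).1 Q.exact₀ x hx
    let C : ChainComplex (ModuleCat.{u} A) ℕ :=
      ChainComplex.of (extendX F Q.complex) (extendD F Q.complex (e₀ ≫ ι)) (by
        rintro (_ | k)
        · show Q.complex.d 1 0 ≫ (e₀ ≫ ι) = 0
          rw [← Category.assoc, he₀d, zero_comp]
        · exact Q.complex.d_comp_d _ _ _)
    have hCd0 : C.d 1 0 = e₀ ≫ ι := ChainComplex.of_d _ _ 0
    have hCdsucc : ∀ k, C.d (k + 2) (k + 1) = Q.complex.d (k + 1) k := fun k =>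
      ChainComplex.of_d _ _ (k + 1)
    have hιπ : ι ≫ (π : F ⟶ L) = 0 := by
      ext x
      show π.hom x.1 = 0
      exact x.2
    let π' : C ⟶ (ChainComplex.single₀ (ModuleCat.{u} A)).obj L :=
      (ChainComplex.toSingle₀Equiv C L).symm
        ⟨π, by rw [hCd0]; exact (Category.assoc e₀ ι π).trans ((congrArg (e₀ ≫ ·) hιπ).trans comp_zero)⟩
    have hπ'0 : π'.f 0 = π := ChainComplex.toSingle₀Equiv_symm_apply_f_zero _ _
    have hproj : ∀ k, Projective (C.X k) := by
      rintro (_ | k)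
      · exact (inferInstance : Projective F)
      · exact Q.projective k
    have hexactC : ∀ k : ℕ, C.ExactAt (k + 1) := by
      rintro (_ | m)
      · show C.ExactAt 1
        rw [HomologicalComplex.exactAt_iff' _ 2 1 0 (by simp) (by simp),
          ShortComplex.moduleCat_exact_iff]
        dsimp [HomologicalComplex.sc', HomologicalComplex.shortComplexFunctor']
        have e1 : C.d 2 1 = Q.complex.d 1 0 := hCdsucc 0
        rw [e1, hCd0]
        intro x hx
        have hx0 : e₀ x = 0 := by
          apply hι
          rw [map_zero]
          exact hx
        obtain ⟨y, hy⟩ := hex x hx0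
        exact ⟨y, hy⟩
      · show C.ExactAt (m + 2)
        rw [HomologicalComplex.exactAt_iff' _ (m + 3) (m + 2) (m + 1) (by simp) (by simp),
          ShortComplex.moduleCat_exact_iff]
        dsimp [HomologicalComplex.sc', HomologicalComplex.shortComplexFunctor']
        have e1 : C.d (m + 3) (m + 2) = Q.complex.d (m + 2) (m + 1) := hCdsucc (m + 1)
        have e2 : C.d (m + 2) (m + 1) = Q.complex.d (m + 1) m := hCdsucc m
        rw [e1, e2]
        exact (ShortComplex.moduleCat_exact_iff _).1 (Q.exact_succ m)
    have hquasi0 : QuasiIsoAt π' 0 := by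
      rw [ChainComplex.quasiIsoAt₀_iff, ShortComplex.quasiIso_iff_of_zeros']
      · constructor
        · rw [ShortComplex.moduleCat_exact_iff]
          dsimp [HomologicalComplex.shortComplexFunctor']
          rw [hCd0, hπ'0]
          intro x hx
          obtain ⟨y, hy⟩ := he₀s ⟨x, LinearMap.mem_ker.mpr hx⟩
          refine ⟨y, ?_⟩
          show ι (e₀ y) = x
          rw [hy]
          rfl
        · have hepi : Epi (π'.f 0) := by
            rw [hπ'0]
            exact (ModuleCat.epi_iff_surjective (π : F ⟶ L)).2 hπ
          exact hepi
      · rfl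
      · rfl
      · rfl
    refine ⟨{ complex := C, projective := hproj, π := π',
              quasiIso := ⟨fun k => by
                cases k with
                | zero => exact hquasi0
                | succ k =>
                  rw [quasiIsoAt_iff_exactAt' π' (k + 1)
                    (ChainComplex.exactAt_succ_single_obj _ _)]
                  exact hexactC k⟩ }, ?_⟩
    rintro (_ | k) hk
    · omega
    · exact hQ k (by omega)

lemma ext_vanish_of_projDimLE (n : ℕ) (L : ModuleCat.{u} A) (h : ProjDimLE A n L)
    (M : ModuleCat.{u} A) (k : ℕ) (hk : n < k) : Subsingleton (extAb A k L M) := by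
  obtain ⟨P, hP⟩ := projDimLE_resolution n L h
  rw [subsingleton_ext_iff _ _ P]
  obtain ⟨j, rfl⟩ : ∃ j, k = j + 1 := ⟨k - 1, by omega⟩
  rw [HomologicalComplex.exactAt_iff' _ j (j + 1) (j + 2) (by simp) (by simp)]
  refine ShortComplex.exact_of_isZero_X₂ _ ?_
  have hz := hP (j + 1) (by omega)
  have hzsub : Subsingleton (P.complex.X (j + 1) ⟶ M) := ⟨fun f g => hz.eq_of_src f g⟩
  exact @ModuleCat.isZero_of_subsingleton ℤ _ _ hzsub

end

end Stmt15Aux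

/-- if `D` is an `n`-th cosyzygy of `N` in an injective coresolution and
every module of finite flat dimension has projective dimension at most `n`, then `D` is
strongly cotorsion. -/
theorem stmt15 (A : Type u) [Ring A] (n : ℕ) (N D : ModuleCat.{u} A)
    (h : ∀ L : ModuleCat.{u} A, FiniteFlatDim A L → ProjDimLE A n L)
    (hc : CosyzygyOf A n N D) :
    StronglyCotorsion A D := by
  intro L hLf
  have hpd := h L hLf
  have h1 : Subsingleton (extAb A (0 + 1 + n) L N) :=
    Stmt15Aux.ext_vanish_of_projDimLE n L hpd N _ (by omega)
  exact Stmt15Aux.ext_shift n N D hc L 0 h1
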